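/- For angles φ₁, φ₂ ∈ [-φₘ, φₘ] with 0 < φₘ ≤ π/18, and any angle δ, the quantity A = cos(δ)·cos(φ₁)·cos(φ₂) + sin(φ₁)·sin(φ₂) satisfies A ≥ cos(δ) - (1 + cos(δ))·sin²(φₘ). -/
import Mathlib

open Real

theorem length_constraint_lower_bound
    (φm φ1 φ2 δ : ℝ) (hφm : 0 < φm) (hφm' : φm ≤ π / 18)
    (h1 : φ1 ∈ Set.Icc (-φm) φm) (h2 : φ2 ∈ Set.Icc (-φm) φm) :
    cos δ * cos φ1 * cos φ2 + sin φ1 * sin φ2 ≥ cos δ - (1 + cos δ) * (sin φm) ^ 2 := by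
  obtain ⟨h1l, h1r⟩ := h1
  obtain ⟨h2l, h2r⟩ := h2
  have hpi : (0:ℝ) < π := Real.pi_pos
  have hcd : cos (2*φm) ≤ cos (φ1 - φ2) := by
    rcases le_or_gt 0 (φ1 - φ2) with h | h
    · exact Real.cos_le_cos_of_nonneg_of_le_pi h (by linarith) (by linarith)
    · rw [← Real.cos_neg (φ1 - φ2)]
      exact Real.cos_le_cos_of_nonneg_of_le_pi (by linarith) (by linarith) (by linarith)
  have e1 : cos (φ1 - φ2) = cos φ1 * cos φ2 + sin φ1 * sin φ2 := Real.cos_sub _ _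
  have e2 : cos (φ1 + φ2) = cos φ1 * cos φ2 - sin φ1 * sin φ2 := Real.cos_add _ _
  have e3 : cos (2*φm) = 1 - 2 * sin φm ^ 2 := by
    have := Real.cos_two_mul φm
    have := Real.sin_sq_add_cos_sq φm
    nlinarith
  have hc1 : cos (φ1 + φ2) ≤ 1 := Real.cos_le_one _
  have hd1 : cos δ ≤ 1 := Real.cos_le_one _
  have hd2 : -1 ≤ cos δ := Real.neg_one_le_cos _
  nlinarith [mul_nonneg (by linarith : (0:ℝ) ≤ 1 + cos δ)
      (by nlinarith : (0:ℝ) ≤ cos (φ1 - φ2) - 1 + 2 * sin φm ^ 2),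
    mul_nonneg (by linarith : (0:ℝ) ≤ 1 - cos δ)
      (by linarith : (0:ℝ) ≤ 1 - cos (φ1 + φ2))]
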